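/- arXiv:1708.05255 — 3 statements merged into one kernel-verified Lean document; each statement's English description precedes it below -/
import Mathlib

section
/- For every non-negative integer n₁, if there exists a morphism (t,c)→(t′,c′) in the subcategory Seg(Ω|n₁) of quasi-homologous segments (morphisms whose first component f₁ is the identity on [n₁]), then it is the unique morphism of type (t,c)→(t′,c′) in the whole category Seg(Ω). Consequently Seg(Ω|n₁) is a pre-order category. -/
/-- A segment over a pre-ordered set `Ω` of type `[n₁] ⊸ [n₀]`: an order-preserving
surjection `t : [n₁] → [n₀]` together with a coloring `c : [n₀] → Ω`. -/
structure Seg (Ω : Type) [Preorder Ω] (n₁ n₀ : ℕ) where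
  t : Fin n₁ → Fin n₀
  t_mono : Monotone t
  t_surj : Function.Surjective t
  c : Fin n₀ → Ω

/-- A morphism of segments: an order-preserving injection `f₁`, an order-preserving
map `f₀`, such that `f₀ ∘ t = t' ∘ f₁` and `c' ∘ f₀ ⪯ c` pointwise. -/
structure SegHom {Ω : Type} [Preorder Ω] {n₁ n₀ m₁ m₀ : ℕ}
    (A : Seg Ω n₁ n₀) (B : Seg Ω m₁ m₀) where
  f₁ : Fin n₁ → Fin m₁
  f₀ : Fin n₀ → Fin m₀
  f₁_mono : Monotone f₁
  f₁_inj : Function.Injective f₁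
  f₀_mono : Monotone f₀
  comm : ∀ i, f₀ (A.t i) = B.t (f₁ i)
  color : ∀ i, B.c (f₀ i) ≤ A.c i

/-- A monotone injection `Fin n → Fin n` is the identity. -/
lemma mono_inj_fin_eq_id {n : ℕ} {f : Fin n → Fin n} (hm : Monotone f)
    (hi : Function.Injective f) : f = id := by
  have hs : StrictMono f := hm.strictMono_of_injective hi
  exact (hs.range_inj strictMono_id).mp
    ((Finite.injective_iff_surjective.mp hi).range_eq.trans Set.range_id.symm)

/-- if there is a morphism of quasi-homologous segments
(same domain `[n₁]`, first component the identity), it is the unique morphism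
with that source and target in the whole category `Seg(Ω)`; in particular
`Seg(Ω|n₁)` is a pre-order category. -/
theorem quasi_homologous_unique {Ω : Type} [Preorder Ω] {n₁ n₀ m₀ : ℕ}
    (A : Seg Ω n₁ n₀) (B : Seg Ω n₁ m₀)
    (h : SegHom A B) (hid : h.f₁ = id) (g : SegHom A B) : g = h := by
  have hg1 : g.f₁ = id := mono_inj_fin_eq_id g.f₁_mono g.f₁_inj
  have hf0 : g.f₀ = h.f₀ := by
    funext i
    obtain ⟨j, rfl⟩ := A.t_surj i
    rw [g.comm, h.comm, hg1, hid]
  cases g; cases h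
  simp_all
end

section
/- Let (Ω,D) be a b-distributive chromology, i.e., for every cone ρ:Δ_A(τ)⇒θ in D, the canonical map colim_A Tr_b∘θ → Tr_b(τ) is surjective. Then the functor E_b^ε: Seg(Ω)→Set sends every cone in D to a cone whose limit adjoint E_b^ε(τ) → lim_A E_b^ε∘θ is injective (i.e., E_b^ε is a W^inj-pedigrad). -/
/-- The `b`-truncation of a segment: `Tr_b(t,c) = { i ∈ [n₁] | b ⪯ c(t(i)) }`. -/
def TrSet {Ω : Type} [Preorder Ω] (b : Ω) {n₁ n₀ : ℕ} (A : Seg Ω n₁ n₀) : Set (Fin n₁) :=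
  {i | b ≤ A.c (A.t i)}

/-- let `(Ω,D)` be a `b`-distributive chromology.  For a cone
`ρ : Δ_A(τ) ⇒ θ` in `Seg(Ω|n)` (over a small index category `A`, which — `Seg(Ω|n)`
being a pre-order category — is given by a preorder on `A`, legs `τ → θ(a)` and
connecting morphisms `θ(a) → θ(a′)` for `a ≤ a′`, all with identity first
component), `b`-distributivity means the canonical map `colim_A Tr_b∘θ → Tr_b(τ)`
is surjective, i.e. `Tr_b(τ) = ⋃_a Tr_b(θ(a))`.  Then, `E_b^ε` being identified with
`Set(Tr_b(−),E)` on `Seg(Ω|n)`, the limit adjoint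
`E_b^ε(τ) → lim_A E_b^ε∘θ` is injective: the restriction map
`(Tr_b(τ) → E) → ∏_a (Tr_b(θ(a)) → E)` is injective. -/
theorem Ebε_pedigrad_inj {Ω : Type} [Preorder Ω] (b : Ω) (E : Type)
    (A : Type) [Preorder A] {n n₀ : ℕ} (τ : Seg Ω n n₀)
    (m : A → ℕ) (θ : ∀ a : A, Seg Ω n (m a))
    (legs : ∀ a, SegHom τ (θ a)) (hlegs_id : ∀ a, (legs a).f₁ = id)
    (diag : ∀ a a', a ≤ a' → ∃ h : SegHom (θ a) (θ a'), h.f₁ = id)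
    (hlegs : ∀ a, TrSet b (θ a) ⊆ TrSet b τ)
    (hdist : ∀ i ∈ TrSet b τ, ∃ a, i ∈ TrSet b (θ a)) :
    Function.Injective
      (fun (ψ : {i // i ∈ TrSet b τ} → E) (a : A) (j : {i // i ∈ TrSet b (θ a)}) =>
        ψ ⟨j.1, hlegs a j.2⟩) := by
  intro ψ φ h
  funext i
  obtain ⟨a, ha⟩ := hdist i.1 i.2
  have := congrFun (congrFun h a) ⟨i.1, ha⟩
  simpa using this
end

section
/- Let S be a Cartesian wide span in Set (the canonical map S → ∏_i S_i is a bijection). Then every equivalence class of the recombination congruence G(S) (the pullback of π_S:F(S)→∏_i F(S_i) along itself) admits a maximum for the support-inclusion partial order on F(S); the maximum of the class of x corresponds, under F(S) ≅ F(∏_i S_i), to the element represented by the subset Supp(x₁)×⋯×Supp(x_k) where (x₁,…,x_k) = π_S(x). -/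
/- Set-up: `F` is the free `B₂`-semimodule functor, realized as `Finset`.  A wide
span `{f i : S → Si i}_{i ∈ Fin k}` is Cartesian when the canonical map
`S → ∏ᵢ Sᵢ`, `s ↦ (i ↦ f i s)`, is a bijection.  `π_S : F(S) → ∏ᵢ F(Sᵢ)` is
`x ↦ (i ↦ image (f i) x)`; the recombination congruence identifies `y ~ x` iff
`π_S y = π_S x`; the order is support inclusion, i.e. `⊆` on `Finset S`. -/

/-- for a Cartesian wide span, every equivalence class of the
recombination congruence `G(S)` admits a maximum `M` for the support-inclusion
partial order, and `M` corresponds under `F(S) ≅ F(∏ᵢ Sᵢ)` to the subset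
`Supp(x₁) × ⋯ × Supp(x_k)` where `(x₁,…,x_k) = π_S(x)`. -/
theorem haplotype_maximum
    (k : ℕ) (S : Type) [DecidableEq S] (Si : Fin k → Type) [∀ i, DecidableEq (Si i)]
    (f : ∀ i, S → Si i)
    (hcart : Function.Bijective (fun s : S => (fun i => f i s : ∀ i, Si i))) :
    ∀ x : Finset S, ∃ M : Finset S,
      (∀ i, M.image (f i) = x.image (f i)) ∧
      (∀ y : Finset S, (∀ i, y.image (f i) = x.image (f i)) → y ⊆ M) ∧
      M.image (fun s => (fun i => f i s : ∀ i, Si i)) =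
        Fintype.piFinset (fun i => x.image (f i)) := by
  intro x
  classical
  set e := Equiv.ofBijective _ hcart with he
  have hes : ∀ s i, e s i = f i s := fun s i => rfl
  refine ⟨(Fintype.piFinset (fun i => x.image (f i))).image e.symm, ?_, ?_, ?_⟩
  · intro i
    apply Finset.Subset.antisymm
    · intro a ha
      rcases Finset.mem_image.mp ha with ⟨s, hs, rfl⟩
      rcases Finset.mem_image.mp hs with ⟨g, hg, rfl⟩
      have : f i (e.symm g) = g i := by
        rw [← hes, Equiv.apply_symm_apply]
      rw [this]
      exact Fintype.mem_piFinset.mp hg i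
    · intro a ha
      rcases Finset.mem_image.mp ha with ⟨s, hs, rfl⟩
      apply Finset.mem_image.mpr
      refine ⟨e.symm (e s), ?_, by rw [Equiv.symm_apply_apply]⟩
      apply Finset.mem_image.mpr
      refine ⟨e s, Fintype.mem_piFinset.mpr fun j => ?_, rfl⟩
      exact Finset.mem_image_of_mem (f j) hs
  · intro y hy s hs
    apply Finset.mem_image.mpr
    refine ⟨e s, Fintype.mem_piFinset.mpr fun j => ?_, Equiv.symm_apply_apply _ _⟩
    rw [hes, ← hy j]
    exact Finset.mem_image_of_mem (f j) hs
  · rw [Finset.image_image]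
    have : ((fun s : S => (fun i => f i s : ∀ i, Si i)) ∘ e.symm) = id := by
      funext g
      exact e.apply_symm_apply g
    rw [this, Finset.image_id]
end
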